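/- Fix μ ∈ [0,2] and set v₀ = μ/(2+μ), v₁ = 2/(2+μ). Define (h₁,h₂)(v) = (0, v/(1−v)) for v ∈ [0,v₀], (v − (μ/2)(1−v), v + (μ/2)v) for v ∈ (v₀,v₁], and (2 − 1/v, 1) for v ∈ (v₁,1], and set h_μ(t,v) := h₁(v)·𝟙_{t≤v} + h₂(v)·𝟙_{t>v}. Then 6∫₀¹∫₀¹ 𝟙_{t≤v}·h_μ(t,v) dt dv − 2 = −2v₁² + 6v₁ − 5 + 1/v₁, and 6∫₀¹∫₀¹ h_μ(t,v)² dt dv − 2 = −4v₁² + 20v₁ − 17 + 2/v₁ − 1/v₁² − 12·ln(v₁). -/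

import Mathlib

open MeasureTheory Set

noncomputable section

def IsCopula (C : ℝ → ℝ → ℝ) : Prop :=
  (∀ u ∈ Icc (0:ℝ) 1, ∀ v ∈ Icc (0:ℝ) 1, C u v ∈ Icc (0:ℝ) 1) ∧
  (∀ u ∈ Icc (0:ℝ) 1, C u 0 = 0 ∧ C u 1 = u) ∧
  (∀ v ∈ Icc (0:ℝ) 1, C 0 v = 0 ∧ C 1 v = v) ∧
  (∀ u₁ ∈ Icc (0:ℝ) 1, ∀ u₂ ∈ Icc (0:ℝ) 1, ∀ v₁ ∈ Icc (0:ℝ) 1, ∀ v₂ ∈ Icc (0:ℝ) 1,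
    u₁ ≤ u₂ → v₁ ≤ v₂ → 0 ≤ C u₂ v₂ - C u₁ v₂ - C u₂ v₁ + C u₁ v₁)

/-- The (a.e. defined) partial derivative of `C` with respect to its first argument. -/
def d1 (C : ℝ → ℝ → ℝ) (t v : ℝ) : ℝ := deriv (fun s => C s v) t

/-- Chatterjee's rank correlation. -/
def xi (C : ℝ → ℝ → ℝ) : ℝ :=
  6 * (∫ v in (0:ℝ)..1, ∫ t in (0:ℝ)..1, (d1 C t v) ^ 2) - 2

/-- Spearman's footrule. -/
def psi (C : ℝ → ℝ → ℝ) : ℝ :=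
  6 * (∫ v in (0:ℝ)..1, C v v) - 2

/-- Stochastically increasing: for each `v`, `t ↦ ∂₁C(t,v)` agrees a.e. on `[0,1]`
with a non-increasing function. -/
def IsSI (C : ℝ → ℝ → ℝ) : Prop :=
  ∀ v ∈ Icc (0:ℝ) 1, ∃ g : ℝ → ℝ, AntitoneOn g (Icc (0:ℝ) 1) ∧
    (∀ᵐ t ∂(volume.restrict (Icc (0:ℝ) 1)), d1 C t v = g t)

/-- `h₁(v)` of the family `C↘_μ`. -/
def hOne (μ v : ℝ) : ℝ :=
  if v ≤ μ / (2 + μ) then 0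
  else if v ≤ 2 / (2 + μ) then v - μ / 2 * (1 - v)
  else 2 - 1 / v

/-- `h₂(v)` of the family `C↘_μ`. -/
def hTwo (μ v : ℝ) : ℝ :=
  if v ≤ μ / (2 + μ) then v / (1 - v)
  else if v ≤ 2 / (2 + μ) then v + μ / 2 * v
  else 1

/-- `h_μ(t,v) = h₁(v)·𝟙_{t ≤ v} + h₂(v)·𝟙_{t > v}`. -/
def hMu (μ t v : ℝ) : ℝ := if t ≤ v then hOne μ v else hTwo μ v

/-! ### Auxiliary lemmas -/

lemma step_integral (v c₁ c₂ : ℝ) (h0 : 0 ≤ v) (h1 : v ≤ 1) :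
    (∫ t in (0:ℝ)..1, (if t ≤ v then c₁ else c₂)) = v * c₁ + (1 - v) * c₂ := by
  have hi1 : IntervalIntegrable (fun t => if t ≤ v then c₁ else c₂) volume 0 v := by
    apply (_root_.intervalIntegrable_const (c := c₁)).congr
    intro t ht; dsimp only
    rw [uIoc_of_le h0] at ht
    rw [if_pos ht.2]
  have hi2 : IntervalIntegrable (fun t => if t ≤ v then c₁ else c₂) volume v 1 := by
    apply (_root_.intervalIntegrable_const (c := c₂)).congr
    intro t ht; dsimp only
    rw [uIoc_of_le h1] at ht
    rw [if_neg (not_le.2 ht.1)]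
  rw [← intervalIntegral.integral_add_adjacent_intervals hi1 hi2]
  have e1 : (∫ t in (0:ℝ)..v, (if t ≤ v then c₁ else c₂)) = v * c₁ := by
    rw [intervalIntegral.integral_congr_ae (g := fun _ => c₁)
      (Filter.Eventually.of_forall fun t ht => by
        rw [uIoc_of_le h0] at ht; exact if_pos ht.2)]
    simp
  have e2 : (∫ t in v..(1:ℝ), (if t ≤ v then c₁ else c₂)) = (1 - v) * c₂ := by
    rw [intervalIntegral.integral_congr_ae (g := fun _ => c₂)
      (Filter.Eventually.of_forall fun t ht => by
        rw [uIoc_of_le h1] at ht; exact if_neg (not_le.2 ht.1))]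
    simp
  rw [e1, e2]

lemma int_congr_Ioc {f g : ℝ → ℝ} {a b : ℝ} (hab : a ≤ b)
    (h : ∀ x ∈ Ioc a b, f x = g x) (hg : IntervalIntegrable g volume a b) :
    IntervalIntegrable f volume a b ∧ (∫ x in a..b, f x) = ∫ x in a..b, g x := by
  constructor
  · apply hg.congr
    intro x hx
    exact (h x (by rwa [uIoc_of_le hab] at hx)).symm
  · exact intervalIntegral.integral_congr_ae
      (Filter.Eventually.of_forall fun x hx => h x (by rwa [uIoc_of_le hab] at hx))

lemma inner_psi (μ v : ℝ) (h0 : 0 ≤ v) (h1 : v ≤ 1) :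
    (∫ t in (0:ℝ)..1, (if t ≤ v then (1:ℝ) else 0) * hMu μ t v) = v * hOne μ v := by
  have h : ∀ t, (if t ≤ v then (1:ℝ) else 0) * hMu μ t v = if t ≤ v then hOne μ v else 0 := by
    intro t; by_cases ht : t ≤ v <;> simp [hMu, ht]
  simp only [h]
  rw [step_integral v _ _ h0 h1]; ring

lemma inner_xi (μ v : ℝ) (h0 : 0 ≤ v) (h1 : v ≤ 1) :
    (∫ t in (0:ℝ)..1, (hMu μ t v) ^ 2) = v * (hOne μ v) ^ 2 + (1 - v) * (hTwo μ v) ^ 2 := by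
  have h : ∀ t, (hMu μ t v) ^ 2 = if t ≤ v then (hOne μ v) ^ 2 else (hTwo μ v) ^ 2 := by
    intro t; by_cases ht : t ≤ v <;> simp [hMu, ht]
  simp only [h]
  rw [step_integral v _ _ h0 h1]

lemma intPoly2 (c d a b : ℝ) :
    (∫ v in a..b, (c * v ^ 2 - d * v)) =
      (c / 3 * b ^ 3 - d / 2 * b ^ 2) - (c / 3 * a ^ 3 - d / 2 * a ^ 2) := by
  apply intervalIntegral.integral_eq_sub_of_hasDerivAt
  · intro x _
    have h := ((hasDerivAt_pow 3 x).const_mul (c / 3)).sub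
      ((hasDerivAt_pow 2 x).const_mul (d / 2))
    convert h using 1
    · funext y; simp only [Pi.sub_apply, Pi.add_apply]
    · push_cast; ring
  · exact (by fun_prop : Continuous fun v : ℝ => c * v ^ 2 - d * v).intervalIntegrable _ _

lemma intLin (a b : ℝ) : (∫ v in a..b, (2 * v - 1)) = (b ^ 2 - b) - (a ^ 2 - a) := by
  apply intervalIntegral.integral_eq_sub_of_hasDerivAt
  · intro x _
    have h := (hasDerivAt_pow 2 x).sub (hasDerivAt_id' (𝕜 := ℝ) x)
    convert h using 1
    · funext y; simp only [Pi.sub_apply, Pi.add_apply]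
    · push_cast; ring
  · exact (by fun_prop : Continuous fun v : ℝ => 2 * v - 1).intervalIntegrable _ _

lemma intLogA (a b : ℝ) (hab : a ≤ b) (hb : b < 1) :
    (∫ v in a..b, v ^ 2 / (1 - v)) =
      (-(1:ℝ)/2 * b ^ 2 - b - Real.log (1 - b)) - (-(1:ℝ)/2 * a ^ 2 - a - Real.log (1 - a)) := by
  apply intervalIntegral.integral_eq_sub_of_hasDerivAt
  · intro x hx
    rw [uIcc_of_le hab] at hx
    have hxne : 1 - x ≠ 0 := by nlinarith [hx.2]
    have h := (((hasDerivAt_pow 2 x).const_mul (-(1:ℝ)/2)).sub (hasDerivAt_id' (𝕜 := ℝ) x)).sub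
      (((hasDerivAt_const x (1:ℝ)).sub (hasDerivAt_id' (𝕜 := ℝ) x)).log hxne)
    convert h using 1
    · funext y; simp only [Pi.sub_apply, Pi.add_apply]
    · simp only [Pi.sub_apply]; push_cast; field_simp; ring
  · apply ContinuousOn.intervalIntegrable
    rw [uIcc_of_le hab]
    exact (continuousOn_pow 2).div (by fun_prop) fun x hx => by nlinarith [hx.2]

lemma intLogB (a b : ℝ) (ha : 0 < a) (hab : a ≤ b) :
    (∫ v in a..b, (3 * v - 3 + 1 / v)) =
      (3/2 * b ^ 2 - 3 * b + Real.log b) - (3/2 * a ^ 2 - 3 * a + Real.log a) := by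
  apply intervalIntegral.integral_eq_sub_of_hasDerivAt
  · intro x hx
    rw [uIcc_of_le hab] at hx
    have hxne : x ≠ 0 := by intro h; rw [h] at hx; exact absurd hx.1 (not_le.2 ha)
    have h := (((hasDerivAt_pow 2 x).const_mul ((3:ℝ)/2)).sub
      ((hasDerivAt_id' (𝕜 := ℝ) x).const_mul 3)).add ((hasDerivAt_id' (𝕜 := ℝ) x).log hxne)
    convert h using 1
    · funext y; simp only [Pi.sub_apply, Pi.add_apply]
    · push_cast; field_simp
  · apply ContinuousOn.intervalIntegrable
    rw [uIcc_of_le hab]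
    apply ContinuousOn.add (by fun_prop)
    exact continuousOn_const.div continuousOn_id fun x hx => by nlinarith [hx.1]

/-- Closed forms of the `ψ`- and `ξ`-functionals of `h_μ` for `μ ∈ [0,2]`,
where `v₁ = 2/(2+μ)`. -/
theorem hMu_psi_xi_closed_form (μ : ℝ) (hμ : μ ∈ Icc (0:ℝ) 2) :
    (6 * (∫ v in (0:ℝ)..1, ∫ t in (0:ℝ)..1,
        (if t ≤ v then (1:ℝ) else 0) * hMu μ t v) - 2 =
      -2 * (2 / (2 + μ)) ^ 2 + 6 * (2 / (2 + μ)) - 5 + 1 / (2 / (2 + μ))) ∧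
    (6 * (∫ v in (0:ℝ)..1, ∫ t in (0:ℝ)..1, (hMu μ t v) ^ 2) - 2 =
      -4 * (2 / (2 + μ)) ^ 2 + 20 * (2 / (2 + μ)) - 17 + 2 / (2 / (2 + μ))
        - 1 / (2 / (2 + μ)) ^ 2 - 12 * Real.log (2 / (2 + μ))) := by
  obtain ⟨hμ0, hμ2⟩ := hμ
  have hs : (0:ℝ) < 2 + μ := by linarith
  have hv0nn : 0 ≤ μ / (2 + μ) := div_nonneg hμ0 hs.le
  have hv0lt1 : μ / (2 + μ) < 1 := (div_lt_one hs).2 (by linarith)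
  have hv01 : μ / (2 + μ) ≤ 2 / (2 + μ) := by
    rw [div_le_div_iff₀ hs hs]; nlinarith
  have hv1pos : 0 < 2 / (2 + μ) := by positivity
  have hv1le1 : 2 / (2 + μ) ≤ 1 := (div_le_one hs).2 (by linarith)
  have h1sub : (1:ℝ) - μ / (2 + μ) = 2 / (2 + μ) := by field_simp; ring
  constructor
  · -- ψ part
    have P1 := int_congr_Ioc (f := fun v => v * hOne μ v) (g := fun _ => (0:ℝ)) hv0nn
      (fun v hv => by simp only [hOne]; rw [if_pos hv.2]; ring)
      (_root_.intervalIntegrable_const)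
    have P2 := int_congr_Ioc (f := fun v => v * hOne μ v)
      (g := fun v => (1 + μ / 2) * v ^ 2 - μ / 2 * v) hv01
      (fun v hv => by
        simp only [hOne]; rw [if_neg (not_le.2 hv.1), if_pos hv.2]; ring)
      ((by fun_prop : Continuous fun v : ℝ => (1 + μ / 2) * v ^ 2 - μ / 2 * v).intervalIntegrable _ _)
    have P3 := int_congr_Ioc (f := fun v => v * hOne μ v) (g := fun v => 2 * v - 1) hv1le1
      (fun v hv => by
        have hvpos : 0 < v := hv1pos.trans hv.1
        simp only [hOne]; rw [if_neg (not_le.2 (lt_of_le_of_lt hv01 hv.1)), if_neg (not_le.2 hv.1)]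
        field_simp)
      ((by fun_prop : Continuous fun v : ℝ => 2 * v - 1).intervalIntegrable _ _)
    have EΨ : (∫ v in (0:ℝ)..1, ∫ t in (0:ℝ)..1, (if t ≤ v then (1:ℝ) else 0) * hMu μ t v)
        = (∫ v in (0:ℝ)..(μ / (2 + μ)), (fun _ => (0:ℝ)) v)
          + (∫ v in (μ / (2 + μ))..(2 / (2 + μ)), ((1 + μ / 2) * v ^ 2 - μ / 2 * v))
          + (∫ v in (2 / (2 + μ))..(1:ℝ), (2 * v - 1)) := by
      rw [intervalIntegral.integral_congr (g := fun v => v * hOne μ v) (fun v hv => by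
        rw [uIcc_of_le zero_le_one] at hv; exact inner_psi μ v hv.1 hv.2)]
      rw [← intervalIntegral.integral_add_adjacent_intervals (P1.1.trans P2.1) P3.1,
        ← intervalIntegral.integral_add_adjacent_intervals P1.1 P2.1, P1.2, P2.2, P3.2]
    rw [EΨ, intervalIntegral.integral_zero, intPoly2, intLin]
    field_simp
    ring
  · -- ξ part
    have Q1 := int_congr_Ioc (f := fun v => v * hOne μ v ^ 2 + (1 - v) * hTwo μ v ^ 2)
      (g := fun v => v ^ 2 / (1 - v)) hv0nn
      (fun v hv => by
        have hne : (1:ℝ) - v ≠ 0 := by nlinarith [hv.2]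
        simp only [hOne, hTwo]; rw [if_pos hv.2, if_pos hv.2]
        field_simp; ring)
      (by
        apply ContinuousOn.intervalIntegrable
        rw [uIcc_of_le hv0nn]
        exact (continuousOn_pow 2).div (by fun_prop) fun x hx => by nlinarith [hx.2])
    have Q2 := int_congr_Ioc (f := fun v => v * hOne μ v ^ 2 + (1 - v) * hTwo μ v ^ 2)
      (g := fun v => (1 - (μ / 2) ^ 2) * v ^ 2 - (-((μ / 2) ^ 2)) * v) hv01
      (fun v hv => by
        simp only [hOne, hTwo]
        rw [if_neg (not_le.2 hv.1), if_neg (not_le.2 hv.1), if_pos hv.2, if_pos hv.2]; ring)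
      ((by fun_prop : Continuous fun v : ℝ =>
        (1 - (μ / 2) ^ 2) * v ^ 2 - (-((μ / 2) ^ 2)) * v).intervalIntegrable _ _)
    have Q3 := int_congr_Ioc (f := fun v => v * hOne μ v ^ 2 + (1 - v) * hTwo μ v ^ 2)
      (g := fun v => 3 * v - 3 + 1 / v) hv1le1
      (fun v hv => by
        have hvpos : 0 < v := hv1pos.trans hv.1
        simp only [hOne, hTwo]
        rw [if_neg (not_le.2 (lt_of_le_of_lt hv01 hv.1)), if_neg (not_le.2 hv.1),
          if_neg (not_le.2 (lt_of_le_of_lt hv01 hv.1)), if_neg (not_le.2 hv.1)]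
        field_simp; ring)
      (by
        apply ContinuousOn.intervalIntegrable
        rw [uIcc_of_le hv1le1]
        apply ContinuousOn.add (by fun_prop)
        exact continuousOn_const.div continuousOn_id fun x hx => by nlinarith [hx.1])
    have EΞ : (∫ v in (0:ℝ)..1, ∫ t in (0:ℝ)..1, (hMu μ t v) ^ 2)
        = (∫ v in (0:ℝ)..(μ / (2 + μ)), v ^ 2 / (1 - v))
          + (∫ v in (μ / (2 + μ))..(2 / (2 + μ)),
              ((1 - (μ / 2) ^ 2) * v ^ 2 - (-((μ / 2) ^ 2)) * v))
          + (∫ v in (2 / (2 + μ))..(1:ℝ), (3 * v - 3 + 1 / v)) := by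
      rw [intervalIntegral.integral_congr
        (g := fun v => v * hOne μ v ^ 2 + (1 - v) * hTwo μ v ^ 2) (fun v hv => by
          rw [uIcc_of_le zero_le_one] at hv; exact inner_xi μ v hv.1 hv.2)]
      rw [← intervalIntegral.integral_add_adjacent_intervals (Q1.1.trans Q2.1) Q3.1,
        ← intervalIntegral.integral_add_adjacent_intervals Q1.1 Q2.1, Q1.2, Q2.2, Q3.2]
    rw [EΞ, intLogA 0 (μ / (2 + μ)) hv0nn hv0lt1, intPoly2,
      intLogB (2 / (2 + μ)) 1 hv1pos hv1le1, h1sub]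
    norm_num [Real.log_one]
    field_simp
    ring
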